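/- Let X be a discrete log-concave random variable (an integer-valued random variable whose probability mass function p satisfies p(k)^2 ≥ p(k-1)·p(k+1) for all integers k and whose support is a contiguous interval of integers) with finite expectation. Then P(X < E[X] + 1) ≥ 1/e. -/

import Mathlib

open MeasureTheory

namespace FeigeAux

open Real

variable {c : ℕ → ℝ}

/-- Cross-ratio monotonicity for log-concave sequences. -/
lemma gen_lc (h0 : ∀ j, 0 ≤ c j) (hlc : ∀ j, c j * c (j + 2) ≤ c (j + 1) ^ 2)
    (hz : ∀ j, c j = 0 → c (j + 1) = 0) :
    ∀ a k, c a * c (a + k + 2) ≤ c (a + 1) * c (a + k + 1) := by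
  intro a k
  induction k with
  | zero => simpa [pow_two] using hlc a
  | succ k ih =>
    by_cases hk1 : c (a + k + 1) = 0
    · have h2 : c (a + k + 2) = 0 := by simpa [show a+k+1+1 = a+k+2 by ring] using hz _ hk1
      have h3 : c (a + k + 3) = 0 := by simpa [show a+k+2+1 = a+k+3 by ring] using hz _ h2
      have : a + (k+1) + 2 = a + k + 3 := by ring
      rw [this, h3, mul_zero]
      exact mul_nonneg (h0 _) (h0 _)
    by_cases hk2 : c (a + k + 2) = 0
    · have h3 : c (a + k + 3) = 0 := by simpa [show a+k+2+1 = a+k+3 by ring] using hz _ hk2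
      have : a + (k+1) + 2 = a + k + 3 := by ring
      rw [this, h3, mul_zero]
      exact mul_nonneg (h0 _) (h0 _)
    · have hk1p : 0 < c (a + k + 1) := lt_of_le_of_ne (h0 _) (Ne.symm hk1)
      have hk2p : 0 < c (a + k + 2) := lt_of_le_of_ne (h0 _) (Ne.symm hk2)
      have hlck : c (a + k + 1) * c (a + k + 3) ≤ c (a + k + 2) ^ 2 := by
        have := hlc (a + k + 1)
        simpa [show a+k+1+2 = a+k+3 by ring, show a+k+1+1 = a+k+2 by ring] using this
      have e1 : a + (k+1) + 2 = a + k + 3 := by ring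
      have e2 : a + (k+1) + 1 = a + k + 2 := by ring
      rw [e1, e2]
      -- from ih : c a * c (a+k+2) ≤ c (a+1) * c (a+k+1)
      -- and hlck : c (a+k+1) * c (a+k+3) ≤ c (a+k+2)^2
      -- conclude c a * c (a+k+3) ≤ c (a+1) * c (a+k+2)
      have hmul : (c a * c (a + k + 3)) * (c (a+k+1) * c (a+k+2)) ≤
          (c (a+1) * c (a+k+2)) * (c (a+k+1) * c (a+k+2)) := by
        have l1 : (c a * c (a+k+3)) * (c (a+k+1) * c (a+k+2)) =
            (c a * c (a+k+2)) * (c (a+k+1) * c (a+k+3)) := by ring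
        have l2 : (c a * c (a+k+2)) * (c (a+k+1) * c (a+k+3)) ≤
            (c (a+1) * c (a+k+1)) * (c (a+k+2)^2) :=
          mul_le_mul ih hlck (mul_nonneg (h0 _) (h0 _)) (mul_nonneg (h0 _) (h0 _))
        have l3 : (c (a+1) * c (a+k+1)) * (c (a+k+2)^2) =
            (c (a+1) * c (a+k+2)) * (c (a+k+1) * c (a+k+2)) := by ring
        rw [l1]; rw [← l3]; exact l2
      exact le_of_mul_le_mul_right hmul (mul_pos hk1p hk2p)

/-- If `c 1 = 0` then the whole tail vanishes. -/
lemma tail_zero (hz : ∀ j, c j = 0 → c (j + 1) = 0) (h1 : c 1 = 0) :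
    ∀ j, c (j + 1) = 0 := by
  intro j
  induction j with
  | zero => simpa using h1
  | succ j ih => simpa [show j+1+1 = (j+1)+1 by ring] using hz _ ih

/-- Key scalar inequality for the induction step. -/
lemma feige_scalar (M c : ℝ) (v : ℕ) (hc : 0 ≤ c) (hcM : c * (M + 1) ≤ 1)
    (hvM : (v : ℝ) + 1 ≤ M) :
    (M / (M + 1)) ^ (v + 1) ≤ (1 - c) * ((M - 1 + c) / M) ^ v := by
  have hv0 : (0:ℝ) ≤ v := Nat.cast_nonneg v
  have hM1 : (1:ℝ) ≤ M := by linarith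
  have hM0 : (0:ℝ) < M := by linarith
  have hM10 : (0:ℝ) < M + 1 := by linarith
  set δ : ℝ := 1 / (M + 1) - c with hδdef
  have hδ0 : 0 ≤ δ := by
    rw [hδdef, sub_nonneg, le_div_iff₀ hM10]; linarith
  have hδle : δ ≤ 1 / (M + 1) := by rw [hδdef]; linarith
  set u : ℝ := δ * (M + 1) / M ^ 2 with hudef
  set w : ℝ := δ * (M + 1) / M with hwdef
  have hu0 : 0 ≤ u := by positivity
  have hw0 : 0 ≤ w := by positivity
  have hδM : δ * (M + 1) ≤ 1 := by
    calc δ * (M+1) ≤ (1/(M+1)) * (M+1) := mul_le_mul_of_nonneg_right hδle hM10.le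
      _ = 1 := by field_simp
  have huM : u ≤ 1 / M ^ 2 := by
    rw [hudef, div_le_div_iff₀ (by positivity) (by positivity)]
    nlinarith [sq_nonneg M]
  have hwM : w ≤ 1 / M := by
    rw [hwdef, div_le_div_iff₀ hM0 hM0]
    nlinarith
  have hwu : w = u * M := by rw [hwdef, hudef]; field_simp
  have key1 : (M - 1 + c) / M = (M / (M + 1)) * (1 - u) := by
    rw [hudef, hδdef]; field_simp; ring
  have key2 : 1 - c = (M / (M + 1)) * (1 + w) := by
    rw [hwdef, hδdef]; field_simp; ring
  rw [key1, key2, mul_pow, pow_succ]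
  have hB : (0:ℝ) < M / (M+1) := by positivity
  have hBpow : (0:ℝ) < (M / (M+1)) ^ v := by positivity
  -- reduce to 1 ≤ (1 + w) * (1 - u)^v
  have main : 1 ≤ (1 + w) * (1 - u) ^ v := by
    have hbern : 1 - (v:ℝ) * u ≤ (1 - u) ^ v := by
      have hu1 : u ≤ 1 := by
        refine le_trans huM ?_
        rw [div_le_one (by positivity)]
        nlinarith
      have := one_add_mul_le_pow (a := -u) (by linarith : (-2:ℝ) ≤ -u) v
      calc 1 - (v:ℝ)*u = 1 + (v:ℝ) * (-u) := by ring
        _ ≤ (1 + -u) ^ v := this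
        _ = (1 - u) ^ v := by ring_nf
    have hvu : (v:ℝ) * u ≤ 1 := by
      have : (v:ℝ) * u ≤ (M - 1) * (1/M^2) := by
        apply mul_le_mul (by linarith) huM hu0 (by linarith)
      have h2 : (M-1) * (1/M^2) ≤ 1 := by
        have hMM : (0:ℝ) < M^2 := by positivity
        rw [mul_one_div, div_le_one hMM]
        nlinarith
      calc (v:ℝ)*u ≤ (M-1)*(1/M^2) := this
        _ ≤ 1 := h2
    have step : (1 + w) * (1 - (v:ℝ)*u) ≤ (1 + w) * (1 - u)^v := by
      apply mul_le_mul_of_nonneg_left hbern (by linarith)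
    refine le_trans ?_ step
    -- 1 ≤ (1+w)(1 - vu)  ⇔  w - vu - vuw ≥ 0, w = uM, v(1+w) ≤ M
    have hv1w : (v:ℝ) * (1 + w) ≤ M := by
      have : (v:ℝ) * (1 + w) ≤ (M - 1) * (1 + 1/M) := by
        apply mul_le_mul (by linarith) (by linarith) (by positivity) (by linarith)
      calc (v:ℝ)*(1+w) ≤ (M-1)*(1+1/M) := this
        _ = (M^2 - 1)/M := by field_simp; ring
        _ ≤ M := by rw [div_le_iff₀ hM0]; nlinarith
    have hexp : (1+w)*(1-(v:ℝ)*u) = 1 + u*(M - (v:ℝ)*(1+w)) := by rw [hwu]; ring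
    have hnn : 0 ≤ u*(M - (v:ℝ)*(1+w)) := mul_nonneg hu0 (by linarith)
    linarith
  calc (M/(M+1))^v * (M/(M+1)) = (M/(M+1))^v * (M/(M+1)) * 1 := by ring
    _ ≤ (M/(M+1))^v * (M/(M+1)) * ((1+w) * (1-u)^v) := by
        apply mul_le_mul_of_nonneg_left main (by positivity)
    _ = M/(M+1) * (1+w) * ((M/(M+1))^v * (1-u)^v) := by ring

/-- Final numeric computation: from the tail bound `(Mw/(Mw+1))^v` and the
truncation-error control we get `exp(-1)`. -/
lemma feige_final_calc (P Mw : ℝ) (v : ℕ) (hP0 : 0 < P) (hP1 : P ≤ 1)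
    (hv1 : 1 ≤ v) (hvM : (v : ℝ) ≤ Mw) (hkey : (1 - P) * Mw ≤ P * (Mw - v)) :
    Real.exp (-1) ≤ P * (Mw / (Mw + 1)) ^ v := by
  have hv0 : (1:ℝ) ≤ (v:ℝ) := by exact_mod_cast hv1
  have hM1 : (1:ℝ) ≤ Mw := le_trans hv0 hvM
  have hM0 : (0:ℝ) < Mw := by linarith
  have hM10 : (0:ℝ) < Mw + 1 := by linarith
  -- exp(-(1/Mw)) ≤ Mw/(Mw+1)
  have h1 : Real.exp (-(1/Mw)) ≤ Mw / (Mw + 1) := by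
    have h2 : (Mw + 1)/Mw ≤ Real.exp (1/Mw) := by
      have := Real.add_one_le_exp (1/Mw)
      calc (Mw+1)/Mw = 1/Mw + 1 := by rw [add_div, div_self hM0.ne']; ring
        _ ≤ Real.exp (1/Mw) := this
    rw [Real.exp_neg]
    rw [inv_le_comm₀ (Real.exp_pos _) (by positivity)] at *
    · calc (Mw/(Mw+1))⁻¹ = (Mw+1)/Mw := by rw [inv_div]
        _ ≤ Real.exp (1/Mw) := h2
  have h3 : Real.exp (-((v:ℝ)/Mw)) ≤ (Mw/(Mw+1))^v := by
    have : Real.exp (-((v:ℝ)/Mw)) = Real.exp (-(1/Mw)) ^ v := by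
      rw [← Real.exp_nat_mul]; congr 1; field_simp
    rw [this]
    exact pow_le_pow_left₀ (Real.exp_pos _).le h1 v
  -- exp(-v/M) ≥ exp(-1) * (2 - v/M)
  have h4 : Real.exp (-1) * (2 - (v:ℝ)/Mw) ≤ Real.exp (-((v:ℝ)/Mw)) := by
    have hx : (1 - (v:ℝ)/Mw) + 1 ≤ Real.exp (1 - (v:ℝ)/Mw) := Real.add_one_le_exp _
    have : Real.exp (-((v:ℝ)/Mw)) = Real.exp (-1) * Real.exp (1 - (v:ℝ)/Mw) := by
      rw [← Real.exp_add]; congr 1; ring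
    rw [this]
    have := Real.exp_pos (-1:ℝ)
    nlinarith
  -- P * (2 - v/M) ≥ 1
  have h5 : 1 ≤ P * (2 - (v:ℝ)/Mw) := by
    have hequiv : P * (2 - (v:ℝ)/Mw) - 1 = (P * (Mw - v) - (1-P)*Mw) / Mw := by
      field_simp; ring
    have : 0 ≤ (P * (Mw - v) - (1-P)*Mw) / Mw := by
      apply div_nonneg _ hM0.le; linarith
    linarith [hequiv ▸ this]
  calc Real.exp (-1) = Real.exp (-1) * 1 := by ring
    _ ≤ Real.exp (-1) * (P * (2 - (v:ℝ)/Mw)) := by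
        apply mul_le_mul_of_nonneg_left h5 (Real.exp_pos _).le
    _ = P * (Real.exp (-1) * (2 - (v:ℝ)/Mw)) := by ring
    _ ≤ P * Real.exp (-((v:ℝ)/Mw)) := mul_le_mul_of_nonneg_left h4 hP0.le
    _ ≤ P * (Mw/(Mw+1))^v := mul_le_mul_of_nonneg_left h3 hP0.le

/-- Claim 2': head-mass bound `M·c₀ ≤ 1 - c₀` for a normalized log-concave sequence. -/
lemma head_bound (h0 : ∀ j, 0 ≤ c j) (hlc : ∀ j, c j * c (j + 2) ≤ c (j + 1) ^ 2)
    (hz : ∀ j, c j = 0 → c (j + 1) = 0) (hs : HasSum c 1)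
    (hm : Summable (fun j : ℕ => (j : ℝ) * c j)) (hc0 : 0 < c 0) :
    (∑' j : ℕ, (j : ℝ) * c j) * c 0 ≤ 1 - c 0 := by
  classical
  have hc0le : c 0 ≤ 1 := le_hasSum hs 0 (fun i _ => h0 i)
  set ρ : ℝ := 1 - c 0 with hρdef
  have hρ0 : 0 ≤ ρ := by rw [hρdef]; linarith
  have hρ1 : ρ < 1 := by rw [hρdef]; linarith
  -- the tail has sum ρ
  have htail : HasSum (fun j => c (j + 1)) ρ := by
    have := (hasSum_nat_add_iff' (f := c) 1).mpr hs
    simpa [hρdef] using this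
  by_cases hρz : ρ = 0
  · -- all mass at 0
    have hall : ∀ j, c (j + 1) = 0 := by
      intro j
      have hle : c (j + 1) ≤ 0 := by
        have := le_hasSum htail j (fun i _ => h0 _)
        simpa [hρz] using this
      exact le_antisymm hle (h0 _)
    have hM : (∑' j : ℕ, (j : ℝ) * c j) = 0 := by
      have : ∀ j : ℕ, (j : ℝ) * c j = 0 := by
        intro j
        cases j with
        | zero => simp
        | succ j => simp [hall j]
      simp [this]
    rw [hM, zero_mul]
    exact hρ0
  have hρpos : 0 < ρ := lt_of_le_of_ne hρ0 (Ne.symm hρz)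
  set g : ℕ → ℝ := fun j => c 0 * ρ ^ j with hgdef
  have hg0 : ∀ j, 0 < g j := fun j => mul_pos hc0 (pow_pos hρpos j)
  have hgsum : HasSum g 1 := by
    have := (hasSum_geometric_of_lt_one hρ0 hρ1).mul_left (c 0)
    have h1 : c 0 * (1 - ρ)⁻¹ = 1 := by
      rw [hρdef]; field_simp
      rw [sub_sub_cancel, div_self hc0.ne']
    rw [h1] at this; exact this
  have hgs : Summable g := hgsum.summable
  have hgm : Summable (fun j : ℕ => (j : ℝ) * g j) := by
    have h1 : Summable (fun j : ℕ => (j : ℝ) * ρ ^ j) := by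
      have h := summable_pow_mul_geometric_of_norm_lt_one 1 (by
        rw [Real.norm_eq_abs, abs_of_nonneg hρ0]; exact hρ1)
      exact h.congr fun n => by rw [pow_one]
    exact (h1.mul_left (c 0)).congr (fun j => by simp only [hgdef]; ring)
  have hgmom : (∑' j : ℕ, (j : ℝ) * g j) = ρ / c 0 := by
    have h1 : (∑' j : ℕ, (j : ℝ) * ρ ^ j) = ρ / (1 - ρ) ^ 2 :=
      tsum_coe_mul_geometric_of_norm_lt_one (by
        rw [Real.norm_eq_abs, abs_of_nonneg hρ0]; exact hρ1)
    have h2 : (∑' j : ℕ, (j : ℝ) * g j) = c 0 * ∑' j : ℕ, (j : ℝ) * ρ ^ j := by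
      rw [← tsum_mul_left]
      exact tsum_congr fun j => by simp only [hgdef]; ring
    rw [h2, h1, hρdef]
    have : (1 - (1 - c 0)) = c 0 := by ring
    rw [this]
    field_simp
  by_cases hex : ∃ j, c j < g j
  · -- crossing case
    set i := Nat.find hex with hidef
    have hi : c i < g i := Nat.find_spec hex
    have hmin : ∀ j, j < i → g j ≤ c j := fun j hj => le_of_not_gt (Nat.find_min hex hj)
    have hine : i ≠ 0 := by
      intro h
      rw [h] at hi
      simp [hgdef] at hi
    obtain ⟨i₀, hi₀⟩ : ∃ i₀, i = i₀ + 1 := ⟨i - 1, (Nat.succ_pred_eq_of_pos (Nat.pos_of_ne_zero hine)).symm⟩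
    have hgi₀ : g i₀ ≤ c i₀ := hmin i₀ (by omega)
    have hci₀ : 0 < c i₀ := lt_of_lt_of_le (hg0 i₀) hgi₀
    have hiρ : c i ≤ ρ * c i₀ := by
      have h1 : g i = ρ * g i₀ := by rw [hgdef, hi₀]; ring
      have := hi.le
      rw [h1] at this
      exact le_trans this (mul_le_mul_of_nonneg_left hgi₀ hρ0)
    -- step: for all k, c (i + k + 1) ≤ ρ * c (i + k)
    have hstep : ∀ k, c (i + k + 1) ≤ ρ * c (i + k) := by
      intro k
      have hgen := gen_lc h0 hlc hz i₀ k
      have e1 : i₀ + k + 2 = i + k + 1 := by omega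
      have e2 : i₀ + 1 = i := by omega
      have e3 : i₀ + k + 1 = i + k := by omega
      rw [e1, e2, e3] at hgen
      -- hgen : c i₀ * c (i + k + 1) ≤ c i * c (i + k)
      have h2 : c i * c (i + k) ≤ (ρ * c i₀) * c (i + k) :=
        mul_le_mul_of_nonneg_right hiρ (h0 _)
      have h3 : c i₀ * c (i + k + 1) ≤ c i₀ * (ρ * c (i + k)) := by
        calc c i₀ * c (i + k + 1) ≤ c i * c (i + k) := hgen
          _ ≤ (ρ * c i₀) * c (i + k) := h2
          _ = c i₀ * (ρ * c (i + k)) := by ring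
      exact le_of_mul_le_mul_left h3 hci₀
    have hdom : ∀ k, c (i + k) ≤ g (i + k) := by
      intro k
      induction k with
      | zero => simpa using hi.le
      | succ k ih =>
        have h1 : c (i + (k+1)) ≤ ρ * c (i + k) := by
          have := hstep k; rwa [show i + k + 1 = i + (k+1) by ring] at this
        have h2 : ρ * c (i + k) ≤ ρ * g (i + k) := mul_le_mul_of_nonneg_left ih hρ0
        have h3 : ρ * g (i + k) = g (i + (k + 1)) := by rw [hgdef]; ring
        linarith
    -- now the moment comparison
    have hsub : Summable (fun j : ℕ => c j - g j) := hs.summable.sub hgs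
    have hsubm : Summable (fun j : ℕ => (j : ℝ) * (c j - g j)) := by
      have heq : (fun j : ℕ => (j:ℝ) * (c j - g j)) = fun j : ℕ => (j:ℝ) * c j - (j:ℝ) * g j := by
        funext j; ring
      rw [heq]; exact hm.sub hgm
    have htsub : (∑' j : ℕ, (c j - g j)) = 0 := by
      rw [Summable.tsum_sub hs.summable hgs, hs.tsum_eq, hgsum.tsum_eq]; ring
    set S1 := ∑ j ∈ Finset.range i, (c j - g j) with hS1def
    have hS1nn : 0 ≤ S1 := Finset.sum_nonneg fun j hj =>
      sub_nonneg.mpr (hmin j (Finset.mem_range.mp hj))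
    have hsplit : S1 + (∑' k : ℕ, (c (k + i) - g (k + i))) = ∑' j : ℕ, (c j - g j) := by
      exact Summable.sum_add_tsum_nat_add (f := fun j => c j - g j) i hsub
    have htail2 : (∑' k : ℕ, (c (k + i) - g (k + i))) = -S1 := by
      rw [htsub] at hsplit
      linarith
    -- moment split
    have hmsplit : (∑ j ∈ Finset.range i, (j:ℝ) * (c j - g j)) +
        (∑' k : ℕ, ((k + i : ℕ) : ℝ) * (c (k + i) - g (k + i))) =
        ∑' j : ℕ, (j:ℝ) * (c j - g j) := by
      exact Summable.sum_add_tsum_nat_add (f := fun j => (j:ℝ) * (c j - g j)) i hsubm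
    have hbound1 : (∑ j ∈ Finset.range i, (j:ℝ) * (c j - g j)) ≤ (i₀ : ℝ) * S1 := by
      rw [hS1def, Finset.mul_sum]
      apply Finset.sum_le_sum
      intro j hj
      have hj' : j < i := Finset.mem_range.mp hj
      have hnn : 0 ≤ c j - g j := sub_nonneg.mpr (hmin j hj')
      have : (j : ℝ) ≤ (i₀ : ℝ) := by exact_mod_cast (by omega : j ≤ i₀)
      exact mul_le_mul_of_nonneg_right this hnn
    have hbound2 : (∑' k : ℕ, ((k + i : ℕ) : ℝ) * (c (k + i) - g (k + i))) ≤
        (i : ℝ) * (-S1) := by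
      rw [← htail2, ← tsum_mul_left]
      apply Summable.tsum_le_tsum _ (by
        have := (summable_nat_add_iff (f := fun j => (j:ℝ) * (c j - g j)) i).mpr hsubm
        simpa using this) ((summable_nat_add_iff (f := fun j => c j - g j) i).mpr hsub |>.mul_left _)
      intro k
      have hle : c (k + i) - g (k + i) ≤ 0 := by
        have := hdom k
        rw [show i + k = k + i by ring] at this
        linarith
      have : (i : ℝ) ≤ ((k + i : ℕ) : ℝ) := by exact_mod_cast (by omega : i ≤ k + i)
      nlinarith
    -- conclude
    have hmdiff : (∑' j : ℕ, (j:ℝ) * c j) - (∑' j : ℕ, (j:ℝ) * g j) = ∑' j : ℕ, (j:ℝ) * (c j - g j) := by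
      rw [← Summable.tsum_sub hm hgm]
      exact tsum_congr fun j => by ring
    have hfinal : (∑' j : ℕ, (j:ℝ) * (c j - g j)) ≤ 0 := by
      have hii : (i:ℝ) = (i₀:ℝ) + 1 := by exact_mod_cast hi₀
      have hcomb : (i₀:ℝ) * S1 + (i:ℝ) * (-S1) = -S1 := by rw [hii]; ring
      linarith [hbound1, hbound2, hmsplit, hS1nn]
    have hMle : (∑' j : ℕ, (j:ℝ) * c j) ≤ ρ / c 0 := by
      rw [← hgmom]; linarith [hmdiff ▸ hfinal]
    calc (∑' j : ℕ, (j:ℝ) * c j) * c 0 ≤ (ρ / c 0) * c 0 :=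
          mul_le_mul_of_nonneg_right hMle hc0.le
      _ = ρ := by field_simp
  · -- no crossing: c = g
    push_neg at hex
    have hceq : ∀ j, c j = g j := by
      intro j
      by_contra hne
      have hlt : g j < c j := lt_of_le_of_ne (hex j) (fun h => hne h.symm)
      have : (∑' j : ℕ, g j) < ∑' j : ℕ, c j := Summable.tsum_lt_tsum (fun i => hex i) hlt hgs hs.summable
      rw [hs.tsum_eq, hgsum.tsum_eq] at this
      exact lt_irrefl _ this
    have : (∑' j : ℕ, (j:ℝ) * c j) = ρ / c 0 := by
      rw [← hgmom]; exact tsum_congr fun j => by rw [hceq j]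
    rw [this]
    have : ρ / c 0 * c 0 = ρ := by field_simp
    rw [this]

/-- Claim 1': the tail bound for normalized log-concave sequences. -/
lemma tail_bound : ∀ (v : ℕ) (c : ℕ → ℝ), (∀ j, 0 ≤ c j) →
    (∀ j, c j * c (j + 2) ≤ c (j + 1) ^ 2) → (∀ j, c j = 0 → c (j + 1) = 0) →
    HasSum c 1 → Summable (fun j : ℕ => (j : ℝ) * c j) →
    ((v : ℝ) ≤ ∑' j : ℕ, (j : ℝ) * c j) →
    ((∑' j : ℕ, (j : ℝ) * c j) / ((∑' j : ℕ, (j : ℝ) * c j) + 1)) ^ v ≤ ∑' j : ℕ, c (v + j) := by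
  intro v
  induction v with
  | zero =>
    intro c h0 hlc hz hs hm hv
    simpa using le_of_eq hs.tsum_eq.symm
  | succ v ih =>
    intro c h0 hlc hz hs hm hv
    set M : ℝ := ∑' j : ℕ, (j : ℝ) * c j with hMdef
    have hv' : (v : ℝ) + 1 ≤ M := by push_cast at hv; linarith
    have hM1 : (1 : ℝ) ≤ M := by
      have : (0:ℝ) ≤ (v:ℝ) := Nat.cast_nonneg v
      linarith
    have hM0 : (0 : ℝ) < M := by linarith
    -- c 1 > 0
    have hc1 : 0 < c 1 := by
      rcases lt_or_eq_of_le (h0 1) with h | h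
      · exact h
      · exfalso
        have hall := tail_zero hz h.symm
        have : M = 0 := by
          rw [hMdef]
          have hzz : ∀ j : ℕ, (j : ℝ) * c j = 0 := by
            intro j
            cases j with
            | zero => simp
            | succ j => simp [hall j]
          simp [hzz]
        linarith
    -- c 0 > 0 is NOT needed here; but c 0 < 1 is:
    have hc0le : c 0 + c 1 ≤ 1 := by
      have := sum_le_hasSum ({0, 1} : Finset ℕ) (fun i _ => h0 i) hs
      simpa using this
    have hc01 : c 0 < 1 := by linarith
    set r : ℝ := 1 - c 0 with hrdef
    have hr0 : 0 < r := by rw [hrdef]; linarith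
    -- the shifted normalized sequence
    set d : ℕ → ℝ := fun j => c (j + 1) / r with hddef
    have h0d : ∀ j, 0 ≤ d j := fun j => div_nonneg (h0 _) hr0.le
    have hlcd : ∀ j, d j * d (j + 2) ≤ d (j + 1) ^ 2 := by
      intro j
      have hnum : c (j+1) * c (j+2+1) ≤ c (j+1+1) ^ 2 := by
        simpa [show j+1+2 = j+2+1 by ring] using hlc (j + 1)
      calc d j * d (j+2) = (c (j+1) * c (j+2+1)) / r ^ 2 := by
            simp only [hddef]; rw [div_mul_div_comm]; congr 1; ring
        _ ≤ (c (j+1+1) ^ 2) / r ^ 2 := by gcongr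
        _ = d (j+1) ^ 2 := by simp only [hddef]; rw [div_pow]
    have hzd : ∀ j, d j = 0 → d (j + 1) = 0 := by
      intro j hj
      simp only [hddef] at hj ⊢
      rw [div_eq_zero_iff] at hj ⊢
      rcases hj with hj | hj
      · exact Or.inl (hz _ hj)
      · exact Or.inr hj
    have htailsum : HasSum (fun j : ℕ => c (j + 1)) r := by
      have := (hasSum_nat_add_iff' (f := c) 1).mpr hs
      simpa [hrdef] using this
    have hsd : HasSum d 1 := by
      have := htailsum.div_const r
      simpa [hddef, div_self hr0.ne'] using this
    have hmshift : Summable (fun j : ℕ => ((j : ℝ) + 1) * c (j + 1)) := by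
      have h1 := (summable_nat_add_iff (f := fun j : ℕ => (j : ℝ) * c j) 1).mpr hm
      exact h1.congr fun j => by push_cast; ring
    have hmd : Summable (fun j : ℕ => (j : ℝ) * d j) := by
      have h2 : Summable (fun j : ℕ => (j : ℝ) * c (j + 1)) := by
        have := hmshift.sub htailsum.summable
        exact this.congr fun j => by ring
      exact (h2.div_const r).congr fun j => by simp only [hddef]; ring
    -- compute the moment of d
    have hmom1 : (∑' j : ℕ, ((j : ℝ) + 1) * c (j + 1)) = M := by
      have := Summable.sum_add_tsum_nat_add (f := fun j : ℕ => (j : ℝ) * c j) 1 hm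
      -- (∑ range 1) + ∑' (j+1)*c(j+1) = M
      have h1 : (∑ j ∈ Finset.range 1, (j:ℝ) * c j) = 0 := by simp
      rw [h1] at this
      rw [← hMdef] at this
      have h2 : (∑' (i : ℕ), (↑(i + 1):ℝ) * c (i + 1)) = ∑' j : ℕ, ((j : ℝ) + 1) * c (j + 1) :=
        tsum_congr fun j => by push_cast; ring
      linarith [h2 ▸ this]
    have hMd : (∑' j : ℕ, (j : ℝ) * d j) = (M - r) / r := by
      have h1 : (∑' j : ℕ, (j : ℝ) * c (j + 1)) = M - r := by
        have h2 : Summable (fun j : ℕ => (j : ℝ) * c (j + 1)) := by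
          have := hmshift.sub htailsum.summable
          exact this.congr fun j => by ring
        have h3 : (∑' j : ℕ, ((j : ℝ) + 1) * c (j + 1)) - (∑' j : ℕ, c (j + 1)) =
            ∑' j : ℕ, (j : ℝ) * c (j + 1) := by
          rw [← Summable.tsum_sub hmshift htailsum.summable]
          exact tsum_congr fun j => by ring
        rw [hmom1, htailsum.tsum_eq] at h3
        linarith [h3]
      calc (∑' j : ℕ, (j : ℝ) * d j) = (∑' j : ℕ, ((j : ℝ) * c (j + 1)) / r) := by
            exact tsum_congr fun j => by simp only [hddef]; ring
        _ = (∑' j : ℕ, (j : ℝ) * c (j + 1)) / r := by rw [tsum_div_const]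
        _ = (M - r) / r := by rw [h1]
    set Md : ℝ := ∑' j : ℕ, (j : ℝ) * d j with hMddef
    have hvMd : (v : ℝ) ≤ Md := by
      rw [hMd]
      rw [le_div_iff₀ hr0]
      have h1 : 0 ≤ c 0 * M := mul_nonneg (h0 0) hM0.le
      have h2 : r = 1 - c 0 := hrdef
      nlinarith [hv']
    -- apply IH to d
    have hIH := ih d h0d hlcd hzd hsd hmd (by rw [← hMddef]; exact hvMd)
    rw [← hMddef] at hIH
    -- head bound for c : c 0 * (M+1) ≤ 1
    have hhead : c 0 * (M + 1) ≤ 1 := by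
      by_cases hc0z : c 0 = 0
      · rw [hc0z]; norm_num
      · have hc0p : 0 < c 0 := lt_of_le_of_ne (h0 0) (Ne.symm hc0z)
        have := head_bound h0 hlc hz hs hm hc0p
        rw [← hMdef] at this
        nlinarith
    -- scalar inequality
    have hscalar := feige_scalar M (c 0) v (h0 0) hhead hv'
    -- identify (M - 1 + c 0)/M with Md/(Md+1)
    have hMdratio : Md / (Md + 1) = (M - 1 + c 0) / M := by
      have hc0ne : (1:ℝ) - c 0 ≠ 0 := by linarith
      rw [hMd, hrdef]
      have hMne : M ≠ 0 := hM0.ne'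
      field_simp
      rw [sub_add_cancel, mul_div_cancel_left₀ _ hMne]; ring
    -- tail identity
    have htailid : (∑' j : ℕ, c (v + 1 + j)) = r * ∑' j : ℕ, d (v + j) := by
      have h1 : (∑' j : ℕ, d (v + j)) = (∑' j : ℕ, c (v + j + 1)) / r := by
        rw [← tsum_div_const]
      rw [h1]
      rw [mul_div_cancel₀ _ hr0.ne']
      exact tsum_congr fun j => by rw [show v + 1 + j = v + j + 1 by ring]
    calc (M / (M + 1)) ^ (v + 1) ≤ (1 - c 0) * ((M - 1 + c 0) / M) ^ v := hscalar
      _ = r * (Md / (Md + 1)) ^ v := by rw [hMdratio, hrdef]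
      _ ≤ r * ∑' j : ℕ, d (v + j) := mul_le_mul_of_nonneg_left hIH hr0.le
      _ = ∑' j : ℕ, c (v + 1 + j) := htailid.symm

/-- The main step: if there is a good truncation point `w`, the conclusion follows. -/
lemma key_step (p : ℤ → ℝ) (t w : ℤ) (m A : ℝ)
    (hp0 : ∀ k, 0 ≤ p k)
    (hlcp : ∀ k : ℤ, p (k - 1) * p (k + 1) ≤ p k ^ 2)
    (hsp : ∀ a b c' : ℤ, a ≤ b → b ≤ c' → 0 < p a → 0 < p c' → 0 < p b)
    (hpsummable : Summable p) (hptsum : (∑' k : ℤ, p k) = 1)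
    (hksummable : Summable (fun k : ℤ => (k : ℝ) * p k))
    (hm_eq : m = ∑' k : ℤ, (k : ℝ) * p k)
    (hmt : m ≤ (t : ℝ))
    (hA : A = ∑' j : ℕ, p (t - (j : ℤ)))
    (hsplit : ∀ (f : ℤ → ℝ), Summable f → ∀ w : ℤ,
      (∑' j : ℕ, f (w - (j : ℤ))) + (∑' j : ℕ, f (w + 1 + (j : ℤ))) = ∑' k : ℤ, f k)
    (hw : t + 1 ≤ w) (hpw : 0 < p w)
    (hF2 : ((t : ℝ) - 1) * (∑' j : ℕ, p (w - (j : ℤ))) ≤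
      ∑' j : ℕ, ((w - (j : ℤ) : ℤ) : ℝ) * p (w - (j : ℤ))) :
    Real.exp (-1) ≤ A := by
  classical
  have hinjdown : Function.Injective (fun j : ℕ => w - (j : ℤ)) := by
    intro a b hab; simp only at hab; omega
  have hinjup : Function.Injective (fun j : ℕ => w + 1 + (j : ℤ)) := by
    intro a b hab; simp only at hab; omega
  have hPs : Summable (fun j : ℕ => p (w - (j : ℤ))) := hpsummable.comp_injective hinjdown
  have hSs : Summable (fun j : ℕ => ((w - (j : ℤ) : ℤ) : ℝ) * p (w - (j : ℤ))) :=
    hksummable.comp_injective hinjdown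
  have hUs : Summable (fun j : ℕ => p (w + 1 + (j : ℤ))) := hpsummable.comp_injective hinjup
  have hVs : Summable (fun j : ℕ => ((w + 1 + (j : ℤ) : ℤ) : ℝ) * p (w + 1 + (j : ℤ))) :=
    hksummable.comp_injective hinjup
  set P : ℝ := ∑' j : ℕ, p (w - (j : ℤ)) with hPdef
  set S : ℝ := ∑' j : ℕ, ((w - (j : ℤ) : ℤ) : ℝ) * p (w - (j : ℤ)) with hSdef
  set U : ℝ := ∑' j : ℕ, p (w + 1 + (j : ℤ)) with hUdef
  set V : ℝ := ∑' j : ℕ, ((w + 1 + (j : ℤ) : ℤ) : ℝ) * p (w + 1 + (j : ℤ)) with hVdef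
  have hPU : P + U = 1 := by
    have := hsplit p hpsummable w
    rw [hptsum] at this
    exact this
  have hSV : S + V = m := by
    have := hsplit (fun k => (k : ℝ) * p k) hksummable w
    rw [← hm_eq] at this
    exact this
  have hU0 : 0 ≤ U := tsum_nonneg fun j => hp0 _
  have hP1 : P ≤ 1 := by linarith
  have hP0 : 0 < P := by
    have h1 : p w ≤ P := by
      have := Summable.le_tsum hPs 0 (fun j _ => hp0 _)
      simpa using this
    linarith
  -- V ≥ (w+1) * U
  have hVU : ((w : ℝ) + 1) * U ≤ V := by
    rw [hUdef, hVdef, ← tsum_mul_left]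
    apply Summable.tsum_le_tsum _ (hUs.mul_left _) hVs
    intro j
    have h1 : ((w : ℝ) + 1) ≤ ((w + 1 + (j : ℤ) : ℤ) : ℝ) := by push_cast; linarith [Nat.cast_nonneg (α := ℝ) j]
    exact mul_le_mul_of_nonneg_right h1 (hp0 _)
  -- F1
  have hF1 : S ≤ (t : ℝ) - ((w : ℝ) + 1) * (1 - P) := by
    have hU : U = 1 - P := by linarith
    rw [← hU]
    linarith
  -- the normalized downward sequence
  set c : ℕ → ℝ := fun j => p (w - (j : ℤ)) / P with hcdef
  have h0c : ∀ j, 0 ≤ c j := fun j => div_nonneg (hp0 _) hP0.le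
  have hlcc : ∀ j, c j * c (j + 2) ≤ c (j + 1) ^ 2 := by
    intro j
    have h1 := hlcp (w - (j : ℤ) - 1)
    have e1 : w - (j : ℤ) - 1 - 1 = w - ((j : ℕ) + 2 : ℕ) := by push_cast; ring
    have e2 : w - (j : ℤ) - 1 + 1 = w - (j : ℤ) := by ring
    have e3 : w - (j : ℤ) - 1 = w - ((j : ℕ) + 1 : ℕ) := by push_cast; ring
    rw [e1, e2, e3] at h1
    calc c j * c (j + 2) = (p (w - (j:ℤ)) * p (w - ((j:ℕ) + 2 : ℕ))) / P ^ 2 := by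
          simp only [hcdef]; rw [div_mul_div_comm]; congr 1; ring
      _ ≤ (p (w - ((j:ℕ)+1:ℕ)) ^ 2) / P ^ 2 := by
          gcongr
          calc p (w - (j:ℤ)) * p (w - ((j:ℕ) + 2 : ℕ))
              = p (w - ((j:ℕ)+2:ℕ)) * p (w - (j:ℤ)) := by ring
            _ ≤ p (w - ((j:ℕ)+1:ℕ)) ^ 2 := h1
      _ = c (j + 1) ^ 2 := by simp only [hcdef]; rw [div_pow]
  have hzc : ∀ j, c j = 0 → c (j + 1) = 0 := by
    intro j hj
    simp only [hcdef] at hj ⊢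
    rw [div_eq_zero_iff] at hj ⊢
    rcases hj with hj | hj
    · left
      by_contra hne
      have hpos : 0 < p (w - ((j : ℕ) + 1 : ℕ)) := lt_of_le_of_ne (hp0 _) (Ne.symm hne)
      have := hsp (w - ((j:ℕ)+1:ℕ)) (w - (j:ℤ)) w (by push_cast; omega) (by omega) hpos hpw
      rw [hj] at this
      exact lt_irrefl 0 this
    · exact absurd hj hP0.ne'  -- P ≠ 0
  have hwt : (t : ℝ) + 1 ≤ (w : ℝ) := by exact_mod_cast hw
  have hsc : HasSum c 1 := by
    have h := hPs.hasSum.div_const P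
    rw [← hPdef, div_self hP0.ne'] at h
    exact h
  have hjps : Summable (fun j : ℕ => (j : ℝ) * p (w - (j : ℤ))) := by
    have h := (hPs.mul_left ((w : ℝ))).sub hSs
    apply h.congr
    intro j
    push_cast
    ring
  have hmc : Summable (fun j : ℕ => (j : ℝ) * c j) :=
    (hjps.div_const P).congr fun j => by simp only [hcdef]; ring
  have hjtsum : (∑' j : ℕ, (j : ℝ) * p (w - (j : ℤ))) = (w : ℝ) * P - S := by
    have h2 : (∑' j : ℕ, ((w : ℝ) * p (w - (j : ℤ)) - ((w - (j : ℤ) : ℤ) : ℝ) * p (w - (j : ℤ))))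
        = (w : ℝ) * P - S := by
      rw [Summable.tsum_sub (hPs.mul_left _) hSs, tsum_mul_left]
    rw [← h2]
    exact tsum_congr fun j => by push_cast; ring
  have hMc : (∑' j : ℕ, (j : ℝ) * c j) = ((w : ℝ) * P - S) / P := by
    calc (∑' j : ℕ, (j : ℝ) * c j) = ∑' j : ℕ, ((j : ℝ) * p (w - (j : ℤ))) / P :=
          tsum_congr fun j => by simp only [hcdef]; ring
      _ = (∑' j : ℕ, (j : ℝ) * p (w - (j : ℤ))) / P := by rw [tsum_div_const]
      _ = ((w : ℝ) * P - S) / P := by rw [hjtsum]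
  set Mw : ℝ := ((w : ℝ) * P - S) / P with hMwdef
  set v' : ℕ := (w - t).toNat with hv'def
  have hv'1 : 1 ≤ v' := by omega
  have hv'int : ((v' : ℕ) : ℤ) = w - t := Int.toNat_of_nonneg (by omega)
  have hv'cast : ((v' : ℕ) : ℝ) = (w : ℝ) - (t : ℝ) := by exact_mod_cast hv'int
  have hStP : S ≤ (t : ℝ) * P := by
    have hx : 0 ≤ ((w : ℝ) + 1 - t) * (1 - P) := mul_nonneg (by linarith) (by linarith)
    nlinarith [hF1]
  have hv'M : ((v' : ℕ) : ℝ) ≤ Mw := by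
    rw [hv'cast, hMwdef, le_div_iff₀ hP0]
    nlinarith [hStP]
  have hMwP : Mw * P = (w : ℝ) * P - S := div_mul_cancel₀ _ hP0.ne'
  have hchain : (1 - P) * ((w : ℝ) * P - S) ≤ P * ((t : ℝ) * P - S) := by
    have e1 : (1 - P) * ((w : ℝ) * P - S) ≤ (1 - P) * ((w : ℝ) * P - ((t : ℝ) - 1) * P) :=
      mul_le_mul_of_nonneg_left (by linarith [hF2]) (by linarith)
    have e2 : (1 - P) * ((w : ℝ) * P - ((t : ℝ) - 1) * P) = P * (((w : ℝ) + 1 - t) * (1 - P)) := by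
      ring
    have e3 : P * (((w : ℝ) + 1 - t) * (1 - P)) ≤ P * ((t : ℝ) * P - S) := by
      apply mul_le_mul_of_nonneg_left _ hP0.le
      nlinarith [hF1]
    linarith
  have hkey : (1 - P) * Mw ≤ P * (Mw - ((v' : ℕ) : ℝ)) := by
    apply le_of_mul_le_mul_right _ hP0
    have e4 : (Mw - ((v' : ℕ) : ℝ)) * P = (t : ℝ) * P - S := by
      rw [sub_mul, hMwP, hv'cast]
      ring
    calc (1 - P) * Mw * P = (1 - P) * ((w : ℝ) * P - S) := by rw [mul_assoc, hMwP]
      _ ≤ P * ((t : ℝ) * P - S) := hchain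
      _ = P * (Mw - ((v' : ℕ) : ℝ)) * P := by rw [mul_assoc, e4]
  have habstract := tail_bound v' c h0c hlcc hzc hsc hmc (by rw [hMc]; exact hv'M)
  rw [hMc] at habstract
  have htailid : (∑' j : ℕ, c (v' + j)) = A / P := by
    have harg : ∀ j : ℕ, w - ((v' + j : ℕ) : ℤ) = t - (j : ℤ) := by
      intro j
      push_cast
      omega
    calc (∑' j : ℕ, c (v' + j)) = ∑' j : ℕ, p (t - (j : ℤ)) / P := by
          apply tsum_congr
          intro j
          simp only [hcdef]
          rw [harg j]
      _ = (∑' j : ℕ, p (t - (j : ℤ))) / P := by rw [tsum_div_const]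
      _ = A / P := by rw [hA]
  rw [htailid] at habstract
  have hfin := feige_final_calc P Mw v' hP0 hP1 hv'1 hv'M hkey
  have hAP : P * (A / P) = A := by
    rw [mul_comm, div_mul_cancel₀ A hP0.ne']
  calc Real.exp (-1) ≤ P * (Mw / (Mw + 1)) ^ v' := hfin
    _ ≤ P * (A / P) := mul_le_mul_of_nonneg_left habstract hP0.le
    _ = A := hAP

end FeigeAux

open FeigeAux

theorem feige_discrete_log_concave
    {Ω : Type*} [MeasurableSpace Ω] (μ : Measure Ω) [IsProbabilityMeasure μ]
    (X : Ω → ℤ) (hX : Measurable X)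
    (hlc : ∀ k : ℤ,
      (μ (X ⁻¹' {k - 1})).toReal * (μ (X ⁻¹' {k + 1})).toReal ≤ (μ (X ⁻¹' {k})).toReal ^ 2)
    (hsupp : ∀ a b c : ℤ, a ≤ b → b ≤ c →
      0 < (μ (X ⁻¹' {a})).toReal → 0 < (μ (X ⁻¹' {c})).toReal → 0 < (μ (X ⁻¹' {b})).toReal)
    (hint : Integrable (fun ω => (X ω : ℝ)) μ) :
    Real.exp (-1) ≤ (μ {ω | (X ω : ℝ) < (∫ ω, (X ω : ℝ) ∂μ) + 1}).toReal := by
  classical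
  set m : ℝ := ∫ ω, (X ω : ℝ) ∂μ with hmdef
  set p : ℤ → ℝ := fun k => (μ (X ⁻¹' {k})).toReal with hpdef
  have hp0 : ∀ k, 0 ≤ p k := fun k => ENNReal.toReal_nonneg
  have hmeas : ∀ k : ℤ, MeasurableSet (X ⁻¹' {k}) := fun k => hX (measurableSet_singleton k)
  have hdisj : Pairwise (Function.onFun Disjoint fun k : ℤ => X ⁻¹' {k}) := by
    intro i j hij
    simp only [Function.onFun]
    apply Set.disjoint_left.mpr
    rintro ω h1 h2
    exact hij (by simp only [Set.mem_preimage, Set.mem_singleton_iff] at h1 h2; rw [← h1, ← h2])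
  have hne : ∀ k : ℤ, μ (X ⁻¹' {k}) ≠ ⊤ := fun k => measure_ne_top μ _
  have hsumENN : (∑' k : ℤ, μ (X ⁻¹' {k})) = 1 := by
    have huniv : (⋃ k : ℤ, X ⁻¹' {k}) = Set.univ := by
      ext ω; simp
    rw [← measure_iUnion hdisj hmeas, huniv, measure_univ]
  have hpsummable : Summable p := by
    apply ENNReal.summable_toReal
    rw [hsumENN]; exact ENNReal.one_ne_top
  have hptsum : (∑' k : ℤ, p k) = 1 := by
    rw [hpdef]
    rw [← ENNReal.tsum_toReal_eq hne, hsumENN]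
    simp
  have hpsum : HasSum p 1 := hptsum ▸ hpsummable.hasSum
  -- the pushforward measure
  set ν : Measure ℤ := Measure.map X μ with hνdef
  have hν : ∀ k : ℤ, ν {k} = μ (X ⁻¹' {k}) := fun k =>
    Measure.map_apply hX (measurableSet_singleton k)
  have hgmeas : Measurable (fun k : ℤ => (k : ℝ)) := measurable_from_top
  have habsmeas : Measurable (fun k : ℤ => |(k : ℝ)|) := measurable_from_top
  have hint_id : Integrable (fun k : ℤ => (k : ℝ)) ν := by
    rw [hνdef]
    rw [integrable_map_measure hgmeas.aestronglyMeasurable hX.aemeasurable]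
    exact hint
  -- expression of the mean
  have hm_eq : m = ∑' k : ℤ, (k : ℝ) * p k := by
    rw [hmdef]
    have h1 : ∫ ω, (X ω : ℝ) ∂μ = ∫ k, (k : ℝ) ∂ν := by
      rw [hνdef, integral_map hX.aemeasurable hgmeas.aestronglyMeasurable]
    rw [h1, integral_countable' hint_id]
    apply tsum_congr
    intro k
    rw [measureReal_def, hν k, smul_eq_mul, mul_comm]
  -- absolute moment summable
  have habs : Summable (fun k : ℤ => |(k : ℝ)| * p k) := by
    have hfin : (∑' k : ℤ, (‖(k : ℝ)‖₊ : ENNReal) * ν {k}) ≠ ⊤ := by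
      have h1 : (∫⁻ k, (‖(k : ℝ)‖₊ : ENNReal) ∂ν) < ⊤ := hint_id.2
      rw [lintegral_countable' (fun k : ℤ => (‖(k : ℝ)‖₊ : ENNReal))] at h1
      exact h1.ne
    have h2 := ENNReal.summable_toReal hfin
    apply h2.congr
    intro k
    rw [ENNReal.toReal_mul, ENNReal.coe_toReal, coe_nnnorm, Real.norm_eq_abs, hν k]
  have hksummable : Summable (fun k : ℤ => (k : ℝ) * p k) := by
    apply Summable.of_abs
    apply habs.congr
    intro k
    rw [abs_mul, abs_of_nonneg (hp0 k)]
  set t : ℤ := ⌈m⌉ with htdef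
  have hmt : m ≤ (t : ℝ) := Int.le_ceil m
  have htm : (t : ℝ) < m + 1 := Int.ceil_lt_add_one m
  -- the event
  have hevent : {ω | (X ω : ℝ) < m + 1} = ⋃ j : ℕ, X ⁻¹' {t - (j : ℤ)} := by
    ext ω
    simp only [Set.mem_setOf_eq, Set.mem_iUnion, Set.mem_preimage, Set.mem_singleton_iff]
    constructor
    · intro hlt
      have hXt : X ω ≤ t := by
        have h1 : ((X ω : ℤ) : ℝ) < ((t + 1 : ℤ) : ℝ) := by push_cast; linarith
        have h2 : X ω < t + 1 := by exact_mod_cast h1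
        omega
      exact ⟨(t - X ω).toNat, by omega⟩
    · rintro ⟨j, hj⟩
      have : (X ω : ℝ) = (t : ℝ) - (j : ℕ) := by rw [hj]; push_cast; ring
      rw [this]
      have : (0:ℝ) ≤ (j:ℕ) := Nat.cast_nonneg j
      linarith
  set A : ℝ := (μ {ω | (X ω : ℝ) < m + 1}).toReal with hAdef
  have hAtsum : A = ∑' j : ℕ, p (t - (j : ℤ)) := by
    rw [hAdef, hevent]
    have hdisj2 : Pairwise (Function.onFun Disjoint fun j : ℕ => X ⁻¹' {t - (j : ℤ)}) := by
      intro i j hij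
      simp only [Function.onFun]
      apply Set.disjoint_left.mpr
      rintro ω h1 h2
      simp only [Set.mem_preimage, Set.mem_singleton_iff] at h1 h2
      apply hij
      have : (i : ℤ) = (j : ℤ) := by omega
      exact_mod_cast this
    rw [measure_iUnion hdisj2 (fun j => hmeas _)]
    rw [ENNReal.tsum_toReal_eq (fun j => hne _)]
  -- summability of shifted sequences
  have hinjdown : ∀ w : ℤ, Function.Injective (fun j : ℕ => w - (j : ℤ)) := by
    intro w a b hab
    simp only at hab
    omega
  have hinjup : ∀ w : ℤ, Function.Injective (fun j : ℕ => w + 1 + (j : ℤ)) := by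
    intro w a b hab
    simp only at hab
    omega
  -- generic splitting of a summable function over ℤ at w
  have hsplit : ∀ (f : ℤ → ℝ), Summable f → ∀ w : ℤ,
      (∑' j : ℕ, f (w - (j : ℤ))) + (∑' j : ℕ, f (w + 1 + (j : ℤ))) = ∑' k : ℤ, f k := by
    intro f hf w
    set F : ℤ → ℝ := fun n => f (w + 1 + n) with hFdef
    have hFsum : ∑' n : ℤ, F n = ∑' k : ℤ, f k := by
      rw [hFdef]
      exact Equiv.tsum_eq (Equiv.addLeft (w + 1)) f
    have hup : Summable (fun n : ℕ => F (n : ℤ)) :=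
      hf.comp_injective (hinjup w)
    have harg : ∀ n : ℕ, w + 1 + -((n : ℤ) + 1) = w - (n : ℤ) := by intro n; ring
    have hdown : Summable (fun n : ℕ => F (-((n : ℤ) + 1))) := by
      have h := hf.comp_injective (hinjdown w)
      apply h.congr
      intro n
      simp only [hFdef, Function.comp]
      rw [harg n]
    have := tsum_of_nat_of_neg_add_one hup hdown
    rw [hFsum] at this
    rw [this]
    have e1 : (∑' n : ℕ, F (n : ℤ)) = ∑' j : ℕ, f (w + 1 + (j : ℤ)) := rfl
    have e2 : (∑' n : ℕ, F (-((n : ℤ) + 1))) = ∑' j : ℕ, f (w - (j : ℤ)) := by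
      apply tsum_congr
      intro n
      simp only [hFdef]
      rw [harg n]
    rw [e1, e2]
    ring
  -- goal is now exp(-1) ≤ A
  have hexp1 : Real.exp (-1 : ℝ) ≤ 1 := by
    rw [← Real.exp_zero]
    apply Real.exp_le_exp.mpr
    norm_num
  have hex0 : ∃ k : ℤ, 0 < p k := by
    by_contra hcon
    push_neg at hcon
    have hzz : ∀ k, p k = 0 := fun k => le_antisymm (hcon k) (hp0 k)
    have : (∑' k : ℤ, p k) = 0 := by simp [hzz]
    rw [hptsum] at this
    norm_num at this
  show Real.exp (-1) ≤ A
  by_cases hbd : ∃ b : ℤ, ∀ k, b < k → p k = 0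
  · obtain ⟨b, hb⟩ := hbd
    have hbdd : ∀ z : ℤ, 0 < p z → z ≤ b := by
      intro z hz
      by_contra hzb
      push_neg at hzb
      rw [hb z hzb] at hz
      exact lt_irrefl 0 hz
    obtain ⟨v, hv, hvmax⟩ := Int.exists_greatest_of_bdd ⟨b, hbdd⟩ hex0
    have hvz : ∀ k, v < k → p k = 0 := by
      intro k hk
      by_contra hne
      have := hvmax k (lt_of_le_of_ne (hp0 k) (Ne.symm hne))
      omega
    by_cases hvt : v ≤ t
    · -- all mass is at or below t, so A = 1
      have hU0 : (∑' j : ℕ, p (t + 1 + (j : ℤ))) = 0 := by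
        have hz2 : ∀ j : ℕ, p (t + 1 + (j : ℤ)) = 0 := by
          intro j
          apply hvz
          have : (0 : ℤ) ≤ (j : ℤ) := Int.ofNat_nonneg j
          omega
        simp [hz2]
      have hA1 : A = 1 := by
        have hsp2 := hsplit p hpsummable t
        rw [hptsum, hU0] at hsp2
        rw [hAtsum]
        linarith
      rw [hA1]
      exact hexp1
    · push_neg at hvt
      have hU0 : (∑' j : ℕ, p (v + 1 + (j : ℤ))) = 0 := by
        have hz2 : ∀ j : ℕ, p (v + 1 + (j : ℤ)) = 0 := by
          intro j
          apply hvz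
          have : (0 : ℤ) ≤ (j : ℤ) := Int.ofNat_nonneg j
          omega
        simp [hz2]
      have hV0 : (∑' j : ℕ, ((v + 1 + (j : ℤ) : ℤ) : ℝ) * p (v + 1 + (j : ℤ))) = 0 := by
        have hz2 : ∀ j : ℕ, ((v + 1 + (j : ℤ) : ℤ) : ℝ) * p (v + 1 + (j : ℤ)) = 0 := by
          intro j
          have : (0 : ℤ) ≤ (j : ℤ) := Int.ofNat_nonneg j
          rw [hvz _ (by omega), mul_zero]
        have heq : (fun j : ℕ => ((v + 1 + (j : ℤ) : ℤ) : ℝ) * p (v + 1 + (j : ℤ))) =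
            fun _ : ℕ => (0 : ℝ) := funext hz2
        rw [heq, tsum_zero]
      apply key_step p t v m A hp0 hlc hsupp hpsummable hptsum hksummable hm_eq hmt hAtsum
        hsplit (by omega) hv
      have hP1' : (∑' j : ℕ, p (v - (j : ℤ))) = 1 := by
        have h1 := hsplit p hpsummable v
        rw [hptsum, hU0] at h1
        linarith
      have hS' : (∑' j : ℕ, ((v - (j : ℤ) : ℤ) : ℝ) * p (v - (j : ℤ))) = m := by
        have h1 := hsplit (fun k => (k : ℝ) * p k) hksummable v
        rw [← hm_eq, hV0] at h1
        linarith
      rw [hP1', hS']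
      linarith
  · push_neg at hbd
    obtain ⟨k₀, hk₀⟩ := hex0
    set h : ℤ → ℝ := fun k => ((k : ℝ) - ((t : ℝ) - 1)) * p k with hhdef
    have hhsum : Summable h := by
      apply (hksummable.sub (hpsummable.mul_left ((t : ℝ) - 1))).congr
      intro k
      simp only [hhdef]
      ring
    have hhabs : Summable (fun k : ℤ => |h k|) := hhsum.abs
    have hγpos : (0 : ℝ) < m - ((t : ℝ) - 1) := by linarith
    have hhtsum : (∑' k : ℤ, h k) = m - ((t : ℝ) - 1) := by
      calc (∑' k : ℤ, h k) = ∑' k : ℤ, ((k : ℝ) * p k - ((t : ℝ) - 1) * p k) :=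
            tsum_congr fun k => by simp only [hhdef]; ring
        _ = (∑' k : ℤ, (k : ℝ) * p k) - ∑' k : ℤ, ((t : ℝ) - 1) * p k :=
            Summable.tsum_sub hksummable (hpsummable.mul_left _)
        _ = m - ((t : ℝ) - 1) := by rw [← hm_eq, tsum_mul_left, hptsum, mul_one]
    -- choose a finite set capturing most of ∑' |h|
    have htt : Filter.Tendsto (fun s : Finset ℤ => ∑ k ∈ s, |h k|) Filter.atTop
        (nhds (∑' k : ℤ, |h k|)) := hhabs.hasSum
    obtain ⟨F, hF⟩ := ((Metric.tendsto_nhds.mp htt) _ hγpos).exists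
    have htail : (∑' k : {x : ℤ // x ∉ F}, |h (k : ℤ)|) < m - ((t : ℝ) - 1) := by
      have hid := Summable.sum_add_tsum_subtype_compl hhabs F
      rw [Real.dist_eq, abs_lt] at hF
      have hnn : (0 : ℝ) ≤ ∑' k : {x : ℤ // x ∉ F}, |h (k : ℤ)| :=
        tsum_nonneg fun k => abs_nonneg _
      have : (∑' k : {x : ℤ // x ∉ F}, |h (k : ℤ)|) = (∑' k : ℤ, |h k|) - ∑ k ∈ F, |h k| := by
        linarith [hid]
      linarith [hF.1, hF.2]
    obtain ⟨b, hbF⟩ := F.exists_le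
    set w : ℤ := max (max (t + 1) k₀) (b + 1) with hwdef
    have hwt : t + 1 ≤ w := le_trans (le_max_left _ _) (le_max_left _ _)
    have hwk₀ : k₀ ≤ w := le_trans (le_max_right _ _) (le_max_left _ _)
    have hwb : b + 1 ≤ w := le_max_right _ _
    obtain ⟨k₁, hk₁w, hk₁⟩ := hbd w
    have hpw : 0 < p w := hsupp k₀ w k₁ hwk₀ (le_of_lt hk₁w) hk₀
      (lt_of_le_of_ne (hp0 k₁) (Ne.symm hk₁))
    apply key_step p t w m A hp0 hlc hsupp hpsummable hptsum hksummable hm_eq hmt hAtsum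
      hsplit hwt hpw
    -- remains : (t-1) * P(w) ≤ S(w)
    have hhu : Summable (fun j : ℕ => h (w + 1 + (j : ℤ))) := hhsum.comp_injective (hinjup w)
    have hsplith := hsplit h hhsum w
    have hup_le : (∑' j : ℕ, h (w + 1 + (j : ℤ))) ≤ ∑' k : {x : ℤ // x ∉ F}, |h (k : ℤ)| := by
      apply Summable.tsum_le_tsum_of_inj (g := fun k : {x : ℤ // x ∉ F} => |h (k : ℤ)|)
        (fun j : ℕ => (⟨w + 1 + (j : ℤ), fun hmem => by have := hbF _ hmem; omega⟩ :
          {x : ℤ // x ∉ F}))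
        (fun a b hab => by
          simp only [Subtype.mk.injEq] at hab
          omega)
        (fun c _ => abs_nonneg _)
        (fun j => le_abs_self _)
        hhu (hhabs.subtype _)
    have hdown_nn : 0 ≤ (∑' j : ℕ, h (w - (j : ℤ))) := by
      rw [hhtsum] at hsplith
      linarith
    -- rewrite the down-sum of h
    have hdown_eq : (∑' j : ℕ, h (w - (j : ℤ))) =
        (∑' j : ℕ, ((w - (j : ℤ) : ℤ) : ℝ) * p (w - (j : ℤ))) -
        ((t : ℝ) - 1) * (∑' j : ℕ, p (w - (j : ℤ))) := by
      calc (∑' j : ℕ, h (w - (j : ℤ)))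
          = ∑' j : ℕ, (((w - (j : ℤ) : ℤ) : ℝ) * p (w - (j : ℤ)) -
              ((t : ℝ) - 1) * p (w - (j : ℤ))) := tsum_congr fun j => by simp only [hhdef]; ring
        _ = (∑' j : ℕ, ((w - (j : ℤ) : ℤ) : ℝ) * p (w - (j : ℤ))) -
            ∑' j : ℕ, ((t : ℝ) - 1) * p (w - (j : ℤ)) :=
            Summable.tsum_sub (hksummable.comp_injective (hinjdown w))
              ((hpsummable.comp_injective (hinjdown w)).mul_left _)
        _ = (∑' j : ℕ, ((w - (j : ℤ) : ℤ) : ℝ) * p (w - (j : ℤ))) -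
            ((t : ℝ) - 1) * (∑' j : ℕ, p (w - (j : ℤ))) := by rw [tsum_mul_left]
    rw [hdown_eq] at hdown_nn
    linarith
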